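/- arXiv:2102.11476 — 5 statements merged into one kernel-verified Lean document; each statement's English description precedes it below -/
import Mathlib

section
/- Let π and ρ be probability measures on a measurable space with π absolutely continuous with respect to ρ, and let f be a nonnegative measurable function with E_π[f log f] < ∞ and 0 < E_π f < ∞. Then E_π[f] · log(E_π[f] / E_ρ[f]) ≤ Ent_π(f) + E_π[f] · log(1 + χ²(π∥ρ)). -/
open MeasureTheory ENNReal NNReal

noncomputable def chi2ENN {Y : Type*} [MeasurableSpace Y] (ρ σ : Measure Y) : ℝ≥0∞ :=
  (∫⁻ y, (ρ.rnDeriv σ y) ^ 2 ∂σ) - 1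

noncomputable def ent {Y : Type*} [MeasurableSpace Y] (ρ : Measure Y) (g : Y → ℝ) : ℝ :=
  ∫ y, g y * Real.log (g y) ∂ρ - (∫ y, g y ∂ρ) * Real.log (∫ y, g y ∂ρ)

section Aux

lemma tangent {x a : ℝ} (hx : 0 ≤ x) (ha : 0 < a) :
    x * Real.log a + x - a ≤ x * Real.log x := by
  rcases hx.eq_or_lt with h | h
  · simp [← h]; linarith
  · have := Real.log_le_sub_one_of_pos (div_pos ha h)
    rw [Real.log_div ha.ne' h.ne'] at this
    have h2 : x * (Real.log a - Real.log x) ≤ x * (a / x - 1) :=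
      mul_le_mul_of_nonneg_left this hx
    rw [mul_sub, mul_sub, mul_div_cancel₀ _ h.ne'] at h2
    linarith

-- 2a ≤ a² + 1 in ℝ≥0∞
lemma two_mul_le_sq_add_one (a : ℝ≥0∞) : 2 * a ≤ a ^ 2 + 1 := by
  rcases eq_or_ne a ⊤ with h | h
  · simp [h]
  · lift a to ℝ≥0 using h
    rw [← ENNReal.coe_pow, ← ENNReal.coe_one, ← ENNReal.coe_ofNat, ← ENNReal.coe_mul,
      ← ENNReal.coe_add, ENNReal.coe_le_coe, ← NNReal.coe_le_coe]
    push_cast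
    nlinarith [sq_nonneg ((a : ℝ) - 1)]

lemma one_le_lintegral_rnDeriv_sq {Ω : Type*} [MeasurableSpace Ω] (μ ρ : Measure Ω)
    [IsProbabilityMeasure μ] [IsProbabilityMeasure ρ] (hac : μ ≪ ρ) :
    1 ≤ ∫⁻ ω, (μ.rnDeriv ρ ω) ^ 2 ∂ρ := by
  have h1 : ∫⁻ ω, μ.rnDeriv ρ ω ∂ρ = 1 := by
    rw [Measure.lintegral_rnDeriv hac]; simp
  have h2 : ∫⁻ ω, 2 * μ.rnDeriv ρ ω ∂ρ ≤ ∫⁻ ω, ((μ.rnDeriv ρ ω) ^ 2 + 1) ∂ρ :=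
    lintegral_mono fun ω => two_mul_le_sq_add_one _
  rw [lintegral_const_mul 2 (μ.measurable_rnDeriv ρ), h1,
    lintegral_add_right _ measurable_const, lintegral_const] at h2
  simp only [mul_one, measure_univ, one_mul] at h2
  have := ENNReal.add_le_add_iff_right (a := 1) (b := 1)
    (c := ∫⁻ ω, (μ.rnDeriv ρ ω) ^ 2 ∂ρ) one_ne_top
  rw [← this]
  calc (1:ℝ≥0∞) + 1 = 2 := by norm_num
  _ ≤ _ := h2.trans (le_refl _)

lemma jensen_mul_log {Ω : Type*} [MeasurableSpace Ω] (μ : Measure Ω)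
    [IsProbabilityMeasure μ] (f : Ω → ℝ) (hf0 : 0 ≤ f)
    (hfint : Integrable f μ) (hflog : Integrable (fun ω => f ω * Real.log (f ω)) μ)
    (hpos : 0 < ∫ ω, f ω ∂μ) :
    (∫ ω, f ω ∂μ) * Real.log (∫ ω, f ω ∂μ) ≤ ∫ ω, f ω * Real.log (f ω) ∂μ := by
  set a := ∫ ω, f ω ∂μ with ha
  have hint2 : Integrable (fun ω => f ω * Real.log a + f ω - a) μ := by
    exact ((hfint.mul_const _).add hfint).sub (integrable_const a)
  have hmono : ∫ ω, (f ω * Real.log a + f ω - a) ∂μ ≤ ∫ ω, f ω * Real.log (f ω) ∂μ :=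
    integral_mono hint2 hflog fun ω => tangent (hf0 ω) hpos
  rw [integral_sub (by exact (hfint.mul_const _).add hfint) (integrable_const a),
    integral_add (hfint.mul_const _) hfint, integral_mul_const, integral_const] at hmono
  simp only [measure_univ, probReal_univ, ENNReal.toReal_one, smul_eq_mul, one_mul, ← ha] at hmono
  linarith

lemma main_real {Ω : Type*} [MeasurableSpace Ω] (μ ρ : Measure Ω)
    [IsProbabilityMeasure μ] [IsProbabilityMeasure ρ] (hac : μ ≪ ρ)
    (f : Ω → ℝ) (hf : Measurable f) (hf0 : 0 ≤ f)
    (hfint : Integrable f μ) (hflog : Integrable (fun ω => f ω * Real.log (f ω)) μ)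
    (hpos : 0 < ∫ ω, f ω ∂μ) (hbint : Integrable f ρ)
    (hN : ∫⁻ ω, (μ.rnDeriv ρ ω) ^ 2 ∂ρ ≠ ⊤)
    (hN1 : 1 ≤ ∫⁻ ω, (μ.rnDeriv ρ ω) ^ 2 ∂ρ) :
    (∫ ω, f ω ∂μ) * Real.log ((∫ ω, f ω ∂μ) / ∫ ω, f ω ∂ρ)
      ≤ ∫ ω, f ω * Real.log (f ω) ∂μ - (∫ ω, f ω ∂μ) * Real.log (∫ ω, f ω ∂μ)
        + (∫ ω, f ω ∂μ) * Real.log (∫⁻ ω, (μ.rnDeriv ρ ω) ^ 2 ∂ρ).toReal := by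
  set a := ∫ ω, f ω ∂μ with ha
  set b := ∫ ω, f ω ∂ρ with hbdef
  set G : Ω → ℝ := fun ω => (μ.rnDeriv ρ ω).toReal with hGdef
  set M : ℝ := (∫⁻ ω, (μ.rnDeriv ρ ω) ^ 2 ∂ρ).toReal with hMdef
  have hGmeas : Measurable G := (μ.measurable_rnDeriv ρ).ennreal_toReal
  have hG0 : ∀ ω, 0 ≤ G ω := fun ω => ENNReal.toReal_nonneg
  -- b > 0
  have hb : 0 < b := by
    rcases (integral_nonneg hf0).lt_or_eq with h | h
    · exact h
    · exfalso
      have hz : f =ᵐ[ρ] 0 := (integral_eq_zero_iff_of_nonneg hf0 hbint).mp h.symm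
      have hzμ : f =ᵐ[μ] 0 := hz.filter_mono hac.ae_le
      have : a = 0 := by rw [ha, integral_congr_ae hzμ]; simp
      exact hpos.ne' this
  -- M ≥ 1
  have hM1 : (1:ℝ) ≤ M := by
    have := (ENNReal.toReal_le_toReal one_ne_top hN).mpr hN1
    simpa using this
  have hM0 : (0:ℝ) < M := lt_of_lt_of_le one_pos hM1
  set c₁ : ℝ := b / a with hc₁def
  set c₂ : ℝ := M / a with hc₂def
  have hc₁ : 0 < c₁ := div_pos hb hpos
  have hc₂ : 0 < c₂ := div_pos hM0 hpos
  -- G² integrable over ρ with integral M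
  have hGsq : Integrable (fun ω => G ω ^ 2) ρ := by
    have := integrable_toReal_of_lintegral_ne_top
      ((μ.measurable_rnDeriv ρ).pow_const 2).aemeasurable hN
    simpa [ENNReal.toReal_pow] using this
  have hGsqval : ∫ ω, G ω ^ 2 ∂ρ = M := by
    have h1 : ∫ ω, ((μ.rnDeriv ρ ω) ^ 2).toReal ∂ρ = M :=
      integral_toReal ((μ.measurable_rnDeriv ρ).pow_const 2).aemeasurable
        ((Measure.rnDeriv_lt_top μ ρ).mono fun ω h => by
          exact ENNReal.pow_lt_top h)
    simpa [ENNReal.toReal_pow] using h1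
  -- the two auxiliary functions
  set p₁ : Ω → ℝ := fun ω => f ω / (c₁ * G ω) with hp₁def
  set p₂ : Ω → ℝ := fun ω => if f ω = 0 then 0 else G ω / c₂ with hp₂def
  -- pointwise facts about G • p₁
  have hq₁0 : ∀ ω, 0 ≤ G ω * p₁ ω := fun ω =>
    mul_nonneg (hG0 ω) (div_nonneg (hf0 ω) (mul_nonneg hc₁.le (hG0 ω)))
  have hq₁le : ∀ ω, G ω * p₁ ω ≤ f ω / c₁ := by
    intro ω
    rcases eq_or_ne (G ω) 0 with h | h
    · have hz : G ω * p₁ ω = 0 := by rw [h]; ring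
      rw [hz]
      exact div_nonneg (hf0 ω) hc₁.le
    · have : G ω * p₁ ω = f ω / c₁ := by
        simp only [hp₁def]
        field_simp
      rw [this]
  have h1 : Integrable (fun ω => (μ.rnDeriv ρ ω).toReal • p₁ ω) ρ := by
    refine (hbint.div_const c₁).mono
      ((hGmeas.mul (hf.div (measurable_const.mul hGmeas))).aestronglyMeasurable) ?_
    refine ae_of_all _ fun ω => ?_
    simp only [smul_eq_mul, Real.norm_eq_abs]
    rw [abs_of_nonneg (hq₁0 ω), abs_of_nonneg (div_nonneg (hf0 ω) hc₁.le)]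
    exact hq₁le ω
  have hint_p₁ : Integrable p₁ μ := (integrable_rnDeriv_smul_iff hac).mp h1
  have hval_p₁ : ∫ ω, p₁ ω ∂μ ≤ a := by
    rw [← integral_rnDeriv_smul hac (f := p₁)]
    have h2 : ∫ ω, (μ.rnDeriv ρ ω).toReal • p₁ ω ∂ρ ≤ ∫ ω, f ω / c₁ ∂ρ :=
      integral_mono h1 (hbint.div_const c₁) fun ω => hq₁le ω
    rw [integral_div] at h2
    calc ∫ ω, (μ.rnDeriv ρ ω).toReal • p₁ ω ∂ρ ≤ b / c₁ := h2
    _ = a := by rw [hc₁def]; field_simp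
  -- pointwise facts about G • p₂
  have hq₂0 : ∀ ω, 0 ≤ G ω * p₂ ω := by
    intro ω
    rcases eq_or_ne (f ω) 0 with h | h
    · simp [hp₂def, h]
    · simp only [hp₂def, if_neg h]
      exact mul_nonneg (hG0 ω) (div_nonneg (hG0 ω) hc₂.le)
  have hq₂le : ∀ ω, G ω * p₂ ω ≤ G ω ^ 2 / c₂ := by
    intro ω
    rcases eq_or_ne (f ω) 0 with h | h
    · simp only [hp₂def, if_pos h, mul_zero]
      exact div_nonneg (sq_nonneg _) hc₂.le
    · simp only [hp₂def, if_neg h]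
      exact le_of_eq (by rw [pow_two, mul_div_assoc])
  have hp₂meas : Measurable p₂ := by
    exact Measurable.ite (hf (measurableSet_singleton 0)) measurable_const
      (hGmeas.div measurable_const)
  have h2 : Integrable (fun ω => (μ.rnDeriv ρ ω).toReal • p₂ ω) ρ := by
    refine (hGsq.div_const c₂).mono ((hGmeas.mul hp₂meas).aestronglyMeasurable) ?_
    refine ae_of_all _ fun ω => ?_
    simp only [smul_eq_mul, Real.norm_eq_abs]
    rw [abs_of_nonneg (hq₂0 ω), abs_of_nonneg (div_nonneg (sq_nonneg _) hc₂.le)]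
    exact hq₂le ω
  have hint_p₂ : Integrable p₂ μ := (integrable_rnDeriv_smul_iff hac).mp h2
  have hval_p₂ : ∫ ω, p₂ ω ∂μ ≤ a := by
    rw [← integral_rnDeriv_smul hac (f := p₂)]
    have h3 : ∫ ω, (μ.rnDeriv ρ ω).toReal • p₂ ω ∂ρ ≤ ∫ ω, G ω ^ 2 / c₂ ∂ρ :=
      integral_mono h2 (hGsq.div_const c₂) fun ω => hq₂le ω
    rw [integral_div, hGsqval] at h3
    calc ∫ ω, (μ.rnDeriv ρ ω).toReal • p₂ ω ∂ρ ≤ M / c₂ := h3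
    _ = a := by rw [hc₂def]; field_simp
  -- integrability of the majorant, piece by piece
  have i3 : Integrable (fun ω => f ω * (Real.log c₁ - 1)) μ := hfint.mul_const _
  have i4 : Integrable (fun ω => f ω * (Real.log c₂ - 1)) μ := hfint.mul_const _
  have i12 : Integrable (fun ω => p₁ ω + p₂ ω) μ := hint_p₁.add hint_p₂
  have i123 : Integrable (fun ω => p₁ ω + p₂ ω + f ω * (Real.log c₁ - 1)) μ := i12.add i3
  have hm_int : Integrable
      (fun ω => p₁ ω + p₂ ω + f ω * (Real.log c₁ - 1) + f ω * (Real.log c₂ - 1)) μ :=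
    i123.add i4
  -- a.e. pointwise bound
  have hae : ∀ᵐ ω ∂μ, -(f ω * Real.log (f ω))
      ≤ p₁ ω + p₂ ω + f ω * (Real.log c₁ - 1) + f ω * (Real.log c₂ - 1) := by
    filter_upwards [Measure.rnDeriv_pos hac,
      (Measure.rnDeriv_lt_top μ ρ).filter_mono hac.ae_le] with ω hrpos hrlt
    have hG : 0 < G ω := ENNReal.toReal_pos hrpos.ne' hrlt.ne
    rcases eq_or_ne (f ω) 0 with h | hfne
    · have e0 : p₁ ω = 0 := by simp [hp₁def, h]
      have e0' : p₂ ω = 0 := by simp [hp₂def, h]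
      rw [h, e0, e0']
      simp
    · have h : 0 < f ω := lt_of_le_of_ne (hf0 ω) (Ne.symm hfne)
      have t₁ := Real.log_le_sub_one_of_pos (div_pos (inv_pos.mpr hG) hc₁)
      rw [Real.log_div (inv_ne_zero hG.ne') hc₁.ne'] at t₁
      have t₂ := Real.log_le_sub_one_of_pos (div_pos (div_pos hG h) hc₂)
      rw [Real.log_div (div_pos hG h).ne' hc₂.ne'] at t₂
      have hsum : Real.log (G ω)⁻¹ + Real.log (G ω / f ω) = -Real.log (f ω) := by
        rw [Real.log_inv, Real.log_div hG.ne' hfne]; ring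
      have hkey : -Real.log (f ω)
          ≤ (G ω)⁻¹ / c₁ - 1 + Real.log c₁ + ((G ω / f ω) / c₂ - 1 + Real.log c₂) := by
        linarith
      have hmul := mul_le_mul_of_nonneg_left hkey (hf0 ω)
      have e₁ : f ω * ((G ω)⁻¹ / c₁) = p₁ ω := by
        simp only [hp₁def]
        rw [div_eq_mul_inv, div_eq_mul_inv, mul_inv]; ring
      have e₂ : f ω * ((G ω / f ω) / c₂) = p₂ ω := by
        simp only [hp₂def, if_neg hfne]
        rw [mul_div_assoc', mul_div_assoc', mul_div_cancel_left₀ _ hfne]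
      calc -(f ω * Real.log (f ω)) = f ω * (-Real.log (f ω)) := by ring
      _ ≤ f ω * ((G ω)⁻¹ / c₁ - 1 + Real.log c₁ + ((G ω / f ω) / c₂ - 1 + Real.log c₂)) := hmul
      _ = f ω * ((G ω)⁻¹ / c₁) + f ω * ((G ω / f ω) / c₂)
            + f ω * (Real.log c₁ - 1) + f ω * (Real.log c₂ - 1) := by ring
      _ = p₁ ω + p₂ ω + f ω * (Real.log c₁ - 1) + f ω * (Real.log c₂ - 1) := by rw [e₁, e₂]
  -- integrate
  have hI : ∫ ω, -(f ω * Real.log (f ω)) ∂μ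
      ≤ ∫ ω, (p₁ ω + p₂ ω + f ω * (Real.log c₁ - 1) + f ω * (Real.log c₂ - 1)) ∂μ :=
    integral_mono_ae hflog.neg hm_int hae
  rw [integral_neg] at hI
  have hmval : ∫ ω, (p₁ ω + p₂ ω + f ω * (Real.log c₁ - 1) + f ω * (Real.log c₂ - 1)) ∂μ
      = ∫ ω, p₁ ω ∂μ + ∫ ω, p₂ ω ∂μ + a * (Real.log c₁ - 1) + a * (Real.log c₂ - 1) := by
    rw [integral_add i123 i4, integral_add i12 i3, integral_add hint_p₁ hint_p₂,
      integral_mul_const, integral_mul_const, ← ha]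
  rw [hmval] at hI
  have hfinal : -(∫ ω, f ω * Real.log (f ω) ∂μ)
      ≤ a * Real.log c₁ + a * Real.log c₂ := by nlinarith [hval_p₁, hval_p₂, hI]
  have l₁ : Real.log c₁ = Real.log b - Real.log a := Real.log_div hb.ne' hpos.ne'
  have l₂ : Real.log c₂ = Real.log M - Real.log a := Real.log_div hM0.ne' hpos.ne'
  have l₃ : Real.log (a / b) = Real.log a - Real.log b := Real.log_div hpos.ne' hb.ne'
  rw [l₁, l₂] at hfinal
  rw [l₃]
  nlinarith [hfinal]

end Aux

theorem key_lemma {Ω : Type*} [MeasurableSpace Ω] (μ ρ : Measure Ω)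
    [IsProbabilityMeasure μ] [IsProbabilityMeasure ρ] (hac : μ ≪ ρ)
    (f : Ω → ℝ) (hf : Measurable f) (hf0 : 0 ≤ f)
    (hfint : Integrable f μ) (hflog : Integrable (fun ω => f ω * Real.log (f ω)) μ)
    (hpos : 0 < ∫ ω, f ω ∂μ) :
    (((∫ ω, f ω ∂μ) * Real.log ((∫ ω, f ω ∂μ) / ∫ ω, f ω ∂ρ)) : EReal)
      ≤ (ent μ f : EReal)
        + ((∫ ω, f ω ∂μ : ℝ) : EReal) * ENNReal.log (1 + chi2ENN μ ρ) := by
  have hN1 : 1 ≤ ∫⁻ ω, (μ.rnDeriv ρ ω) ^ 2 ∂ρ := one_le_lintegral_rnDeriv_sq μ ρ hac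
  have h_chi : 1 + chi2ENN μ ρ = ∫⁻ ω, (μ.rnDeriv ρ ω) ^ 2 ∂ρ := by
    unfold chi2ENN
    exact add_tsub_cancel_of_le hN1
  rw [h_chi]
  rcases eq_or_ne (∫⁻ ω, (μ.rnDeriv ρ ω) ^ 2 ∂ρ) ⊤ with htop | htop
  · rw [htop, ENNReal.log_top, EReal.coe_mul_top_of_pos hpos, EReal.coe_add_top]
    exact le_top
  · have hN0 : (∫⁻ ω, (μ.rnDeriv ρ ω) ^ 2 ∂ρ) ≠ 0 :=
      fun h => by simp [h] at hN1
    have hlog : ENNReal.log (∫⁻ ω, (μ.rnDeriv ρ ω) ^ 2 ∂ρ)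
        = ((Real.log (∫⁻ ω, (μ.rnDeriv ρ ω) ^ 2 ∂ρ).toReal : ℝ) : EReal) := by
      rw [ENNReal.log, if_neg hN0, if_neg htop]
    rw [hlog]
    have hM1 : (1:ℝ) ≤ (∫⁻ ω, (μ.rnDeriv ρ ω) ^ 2 ∂ρ).toReal := by
      have := (ENNReal.toReal_le_toReal one_ne_top htop).mpr hN1
      simpa using this
    have key : (∫ ω, f ω ∂μ) * Real.log ((∫ ω, f ω ∂μ) / ∫ ω, f ω ∂ρ)
        ≤ ent μ f + (∫ ω, f ω ∂μ) * Real.log (∫⁻ ω, (μ.rnDeriv ρ ω) ^ 2 ∂ρ).toReal := by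
      by_cases hbint : Integrable f ρ
      · have := main_real μ ρ hac f hf hf0 hfint hflog hpos hbint htop hN1
        unfold ent
        linarith
      · rw [integral_undef hbint, _root_.div_zero, Real.log_zero, mul_zero]
        have h1 : 0 ≤ ent μ f := by
          unfold ent
          linarith [jensen_mul_log μ f hf0 hfint hflog hpos]
        have h2 : 0 ≤ Real.log (∫⁻ ω, (μ.rnDeriv ρ ω) ^ 2 ∂ρ).toReal :=
          Real.log_nonneg hM1
        exact add_nonneg h1 (mul_nonneg hpos.le h2)
    exact_mod_cast key
end

section
/- Let π_f be the probability measure with density f with respect to π, where f ≥ 0 and E_π f = 1. Then E_π[f log(dπ/dρ)] ≤ E_π[f log f] + log(1 + χ²(π∥ρ)), where π ≪ ρ. -/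
open MeasureTheory ENNReal

theorem tilted_log_density_bound {Ω : Type*} [MeasurableSpace Ω] (μ ρ : Measure Ω)
    [IsProbabilityMeasure μ] [IsProbabilityMeasure ρ] (hac : μ ≪ ρ)
    (f : Ω → ℝ) (hf : Measurable f) (hf0 : 0 ≤ f)
    (hfone : ∫ ω, f ω ∂μ = 1)
    (hflog : Integrable (fun ω => f ω * Real.log (f ω)) μ) :
    ((∫ ω, f ω * Real.log ((μ.rnDeriv ρ ω).toReal) ∂μ : ℝ) : EReal)
      ≤ ((∫ ω, f ω * Real.log (f ω) ∂μ : ℝ) : EReal)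
        + ENNReal.log (1 + chi2ENN μ ρ) := by
  classical
  set g := μ.rnDeriv ρ with hgdef
  have hgm : Measurable g := Measure.measurable_rnDeriv μ ρ
  set S := ∫⁻ y, g y ^ 2 ∂ρ with hSdef
  have hwd : ρ.withDensity g = μ := Measure.withDensity_rnDeriv_eq μ ρ hac
  have hlint : ∫⁻ ω, g ω ∂μ = S := by
    rw [← hwd, lintegral_withDensity_eq_lintegral_mul _ hgm hgm, hSdef]
    congr 1
    funext y
    simp [pow_two]
  have hone : ∫⁻ y, g y ∂ρ = 1 := by
    rw [Measure.lintegral_rnDeriv hac]; simp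
  have haux : ∀ a : ℝ≥0∞, 2 * a ≤ a ^ 2 + 1 := by
    intro a
    rcases eq_or_ne a ⊤ with rfl | h
    · simp
    lift a to NNReal using h
    have h2 : 2 * a ≤ a ^ 2 + 1 := by
      rw [← NNReal.coe_le_coe]
      push_cast
      nlinarith [sq_nonneg ((a : ℝ) - 1)]
    exact_mod_cast h2
  have hS1 : 1 ≤ S := by
    have h2 : 2 * ∫⁻ y, g y ∂ρ ≤ ∫⁻ y, (g y ^ 2 + 1) ∂ρ := by
      rw [← lintegral_const_mul 2 hgm]
      exact lintegral_mono fun y => haux (g y)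
    rw [hone, lintegral_add_right _ measurable_const] at h2
    simp only [lintegral_const, measure_univ, one_mul, mul_one] at h2
    have h3 : (1 : ℝ≥0∞) + 1 ≤ S + 1 := by
      calc (1 : ℝ≥0∞) + 1 = 2 := by norm_num
      _ ≤ S + 1 := h2
    exact ENNReal.le_of_add_le_add_right one_ne_top h3
  have hchi : 1 + chi2ENN μ ρ = S := by
    rw [chi2ENN]
    exact add_tsub_cancel_of_le hS1
  rw [hchi]
  by_cases hStop : S = ⊤
  · rw [hStop, ENNReal.log_top, EReal.add_top_of_ne_bot (EReal.coe_ne_bot _)]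
    exact le_top
  -- finite case
  set C := S.toReal with hCdef
  have hC1 : (1 : ℝ) ≤ C := by
    have := ENNReal.toReal_mono hStop hS1
    simpa using this
  have hCpos : (0 : ℝ) < C := lt_of_lt_of_le one_pos hC1
  have hgfin : ∀ᵐ ω ∂μ, g ω < ⊤ := hac.ae_le (Measure.rnDeriv_lt_top μ ρ)
  have hgpos : ∀ᵐ ω ∂μ, 0 < g ω := Measure.rnDeriv_pos hac
  have hGint : Integrable (fun ω => (g ω).toReal) μ :=
    integrable_toReal_of_lintegral_ne_top hgm.aemeasurable (by rw [hlint]; exact hStop)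
  have hGval : ∫ ω, (g ω).toReal ∂μ = C := by
    rw [integral_toReal hgm.aemeasurable hgfin, hlint]
  have hfint : Integrable f μ := by
    by_contra h
    rw [integral_undef h] at hfone
    norm_num at hfone
  have hlogS : ENNReal.log S = (Real.log C : EReal) := by
    have hS0 : S ≠ 0 := by
      intro h; rw [h] at hS1; exact absurd hS1 (by simp)
    simp [ENNReal.log, hS0, hStop, hCdef]
  rw [hlogS, ← EReal.coe_add, EReal.coe_le_coe_iff]
  -- now a real inequality
  set φ := fun ω => f ω * Real.log (f ω) + ((g ω).toReal / C - f ω + f ω * Real.log C) with hφdef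
  have i0 : Integrable (fun ω => (g ω).toReal / C) μ := hGint.div_const C
  have i1 : Integrable (fun ω => (g ω).toReal / C - f ω) μ := i0.sub hfint
  have i2 : Integrable (fun ω => f ω * Real.log C) μ := hfint.mul_const _
  have hrest : Integrable (fun ω => (g ω).toReal / C - f ω + f ω * Real.log C) μ :=
    i1.add i2
  have hφint : Integrable φ μ := hflog.add hrest
  have hφval : ∫ ω, φ ω ∂μ = (∫ ω, f ω * Real.log (f ω) ∂μ) + Real.log C := by
    rw [hφdef]
    rw [integral_add hflog hrest]
    congr 1
    rw [integral_add i1 i2, integral_sub i0 hfint, integral_div, hGval, hfone,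
        integral_mul_const, hfone]
    field_simp
    ring
  have hpt : ∀ᵐ ω ∂μ, f ω * Real.log ((g ω).toReal) ≤ φ ω := by
    filter_upwards [hgpos, hgfin] with ω h0 htop
    have hGpos : 0 < (g ω).toReal := ENNReal.toReal_pos h0.ne' htop.ne
    have hf0ω : (0 : ℝ) ≤ f ω := hf0 ω
    rcases eq_or_lt_of_le hf0ω with hfz | hfpos
    · simp only [hφdef, ← hfz, zero_mul, zero_add, add_zero, sub_zero]
      positivity
    · have key : Real.log ((g ω).toReal / (f ω * C)) ≤ (g ω).toReal / (f ω * C) - 1 :=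
        Real.log_le_sub_one_of_pos (by positivity)
      rw [Real.log_div hGpos.ne' (by positivity),
          Real.log_mul hfpos.ne' (ne_of_gt hCpos)] at key
      have key2 := mul_le_mul_of_nonneg_left key hfpos.le
      have e1 : f ω * (Real.log ((g ω).toReal) - (Real.log (f ω) + Real.log C))
          = f ω * Real.log ((g ω).toReal) - f ω * Real.log (f ω) - f ω * Real.log C := by
        ring
      have e2 : f ω * ((g ω).toReal / (f ω * C) - 1) = (g ω).toReal / C - f ω := by
        field_simp
      rw [e1, e2] at key2
      simp only [hφdef]
      linarith
  by_cases hLint : Integrable (fun ω => f ω * Real.log ((g ω).toReal)) μ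
  · have hmono := integral_mono_ae hLint hφint hpt
    rw [hφval] at hmono
    exact hmono
  · rw [integral_undef hLint]
    have hpt2 : ∀ᵐ ω ∂μ, f ω - 1 ≤ f ω * Real.log (f ω) := by
      refine Filter.Eventually.of_forall fun ω => ?_
      rcases eq_or_lt_of_le (hf0 ω) with h | h
      · simp [← h]
      · have hk : Real.log (f ω)⁻¹ ≤ (f ω)⁻¹ - 1 :=
          Real.log_le_sub_one_of_pos (inv_pos.2 h)
        rw [Real.log_inv] at hk
        have hk2 := mul_le_mul_of_nonneg_left hk h.le
        have hinv : f ω * (f ω)⁻¹ = 1 := mul_inv_cancel₀ h.ne'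
        nlinarith
    have h1 : 0 ≤ ∫ ω, f ω * Real.log (f ω) ∂μ := by
      have isub : Integrable (fun ω => f ω - 1) μ := hfint.sub (integrable_const 1)
      have hmono2 := integral_mono_ae isub hflog hpt2
      have e : ∫ ω, (f ω - 1) ∂μ = 0 := by
        rw [integral_sub hfint (integrable_const 1), hfone]
        simp
      rw [e] at hmono2
      exact hmono2
    have h2 : 0 ≤ Real.log C := Real.log_nonneg hC1
    linarith
end

section
/- Donsker–Varadhan variational formula: for probability measures μ ≪ ν on a measurable space, KL(μ∥ν) = sup over bounded measurable g of { E_μ[g] - log E_ν[exp g] }. -/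
open MeasureTheory ENNReal Filter

lemma dv_gibbs {Ω : Type*} [MeasurableSpace Ω] (μ ν : Measure Ω)
    [IsProbabilityMeasure μ] [IsProbabilityMeasure ν] (hac : μ ≪ ν)
    (hint : Integrable (fun ω => Real.log ((μ.rnDeriv ν ω).toReal)) μ)
    (g : Ω → ℝ) (hg : Measurable g) (M : ℝ) (hM : ∀ ω, |g ω| ≤ M) :
    ∫ ω, g ω ∂μ - Real.log (∫ ω, Real.exp (g ω) ∂ν)
      ≤ ∫ ω, Real.log ((μ.rnDeriv ν ω).toReal) ∂μ := by
  set f : Ω → ℝ := fun ω => (μ.rnDeriv ν ω).toReal with hf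
  have hfmeas : Measurable f := (Measure.measurable_rnDeriv μ ν).ennreal_toReal
  have hexp_meas : Measurable fun ω => Real.exp (g ω) := hg.exp
  have hexp_bdd : ∀ ω, Real.exp (g ω) ≤ Real.exp M :=
    fun ω => Real.exp_le_exp.2 ((abs_le.1 (hM ω)).2)
  have hexp_int : Integrable (fun ω => Real.exp (g ω)) ν := by
    refine ⟨hexp_meas.aestronglyMeasurable, ?_⟩
    exact HasFiniteIntegral.of_bounded (C := Real.exp M)
      (Filter.Eventually.of_forall fun ω => by
        rw [Real.norm_eq_abs, abs_of_pos (Real.exp_pos _)]; exact hexp_bdd ω)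
  set Z : ℝ := ∫ ω, Real.exp (g ω) ∂ν with hZ
  have hZpos : 0 < Z := by
    have h1 : (0:ℝ) < Real.exp (-M) := Real.exp_pos _
    have hle : Real.exp (-M) ≤ Z := by
      calc Real.exp (-M) = ∫ _, Real.exp (-M) ∂ν := by simp
        _ ≤ Z := by
          refine integral_mono (integrable_const _) hexp_int fun ω => ?_
          exact Real.exp_le_exp.2 (abs_le.1 (hM ω)).1
    linarith
  set h : Ω → ℝ := fun ω => Real.exp (g ω) / (Z * f ω) with hh
  have hhmeas : Measurable h := hexp_meas.div (measurable_const.mul hfmeas)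
  have hhnonneg : ∀ ω, 0 ≤ h ω := fun ω => by
    apply div_nonneg (Real.exp_pos _).le
    have : 0 ≤ f ω := ENNReal.toReal_nonneg
    positivity
  have hlint : ∫⁻ ω, ENNReal.ofReal (h ω) ∂μ ≤ 1 := by
    rw [← MeasureTheory.lintegral_rnDeriv_mul hac hhmeas.ennreal_ofReal.aemeasurable]
    have hb : ∀ᵐ ω ∂ν, μ.rnDeriv ν ω * ENNReal.ofReal (h ω)
        ≤ ENNReal.ofReal (Real.exp (g ω) / Z) := by
      filter_upwards [Measure.rnDeriv_lt_top μ ν] with ω hlt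
      rcases eq_or_ne (μ.rnDeriv ν ω) 0 with h0 | h0
      · simp [h0]
      · have hfpos : 0 < f ω := ENNReal.toReal_pos h0 hlt.ne
        have heq : μ.rnDeriv ν ω = ENNReal.ofReal (f ω) := by
          rw [hf, ENNReal.ofReal_toReal hlt.ne]
        rw [heq, ← ENNReal.ofReal_mul hfpos.le]
        apply ENNReal.ofReal_le_ofReal
        show f ω * (Real.exp (g ω) / (Z * f ω)) ≤ Real.exp (g ω) / Z
        have heq2 : f ω * (Real.exp (g ω) / (Z * f ω)) = Real.exp (g ω) / Z := by
          field_simp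
        exact heq2.le
    calc ∫⁻ ω, μ.rnDeriv ν ω * ENNReal.ofReal (h ω) ∂ν
        ≤ ∫⁻ ω, ENNReal.ofReal (Real.exp (g ω) / Z) ∂ν := lintegral_mono_ae hb
      _ = ENNReal.ofReal (∫ ω, Real.exp (g ω) / Z ∂ν) := by
          rw [← ofReal_integral_eq_lintegral_ofReal (hexp_int.div_const Z)
            (Filter.Eventually.of_forall fun ω => div_nonneg (Real.exp_pos _).le hZpos.le)]
      _ = 1 := by rw [integral_div, ← hZ, div_self hZpos.ne', ENNReal.ofReal_one]
  have hhint : Integrable h μ := by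
    refine ⟨hhmeas.aestronglyMeasurable, ?_⟩
    rw [hasFiniteIntegral_iff_ofReal (Filter.Eventually.of_forall hhnonneg)]
    exact lt_of_le_of_lt hlint one_lt_top
  have hhInt_le : ∫ ω, h ω ∂μ ≤ 1 := by
    rw [integral_eq_lintegral_of_nonneg_ae (Filter.Eventually.of_forall hhnonneg)
      hhmeas.aestronglyMeasurable]
    calc (∫⁻ ω, ENNReal.ofReal (h ω) ∂μ).toReal ≤ (1 : ℝ≥0∞).toReal :=
          ENNReal.toReal_mono one_ne_top hlint
      _ = 1 := by simp
  -- pointwise: g - log f ≤ h - 1 + log Z, μ-a.e.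
  have hpt : ∀ᵐ ω ∂μ, g ω - Real.log (f ω) ≤ h ω + (Real.log Z - 1) := by
    filter_upwards [Measure.rnDeriv_pos hac, hac.ae_le (Measure.rnDeriv_lt_top μ ν)]
      with ω hpos hlt
    have hfpos : 0 < f ω := ENNReal.toReal_pos hpos.ne' hlt.ne
    have hhpos : 0 < h ω := div_pos (Real.exp_pos _) (by positivity)
    have hlog : Real.log (h ω) ≤ h ω - 1 := Real.log_le_sub_one_of_pos hhpos
    have : Real.log (h ω) = g ω - Real.log Z - Real.log (f ω) := by
      rw [hh, Real.log_div (Real.exp_pos _).ne' (by positivity),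
        Real.log_exp, Real.log_mul hZpos.ne' hfpos.ne']
      ring
    linarith [this ▸ hlog]
  have hgint : Integrable g μ := by
    refine ⟨hg.aestronglyMeasurable, ?_⟩
    exact HasFiniteIntegral.of_bounded (C := M)
      (Filter.Eventually.of_forall fun ω => by rw [Real.norm_eq_abs]; exact hM ω)
  have hmain : ∫ ω, (g ω - Real.log (f ω)) ∂μ ≤ ∫ ω, (h ω + (Real.log Z - 1)) ∂μ :=
    integral_mono_ae (hgint.sub hint) (hhint.add (integrable_const _)) hpt
  rw [integral_sub hgint hint, integral_add hhint (integrable_const _),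
    integral_const] at hmain
  simp only [measure_univ, probReal_univ, ENNReal.toReal_one, one_smul] at hmain
  linarith

section Approx

variable {Ω : Type*} [MeasurableSpace Ω] (μ ν : Measure Ω)

noncomputable def dvSeq (n : ℕ) (ω : Ω) : ℝ :=
  if μ.rnDeriv ν ω = 0 then -(n:ℝ)
  else max (min (Real.log ((μ.rnDeriv ν ω).toReal)) n) (-(n:ℝ))

lemma dvSeq_measurable (n : ℕ) : Measurable (dvSeq μ ν n) := by
  apply Measurable.ite (Measure.measurable_rnDeriv μ ν (measurableSet_singleton 0))
    measurable_const
  exact (((Measure.measurable_rnDeriv μ ν).ennreal_toReal.log.min measurable_const).max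
    measurable_const)

lemma dvSeq_abs_le (n : ℕ) (ω : Ω) : |dvSeq μ ν n ω| ≤ (n:ℝ) := by
  unfold dvSeq
  have hn : (0:ℝ) ≤ n := Nat.cast_nonneg n
  split_ifs with h
  · rw [abs_neg, abs_of_nonneg hn]
  · rw [abs_le]
    constructor
    · exact le_max_right _ _
    · exact max_le (min_le_right _ _) (by linarith)

lemma clamp_abs_le (x : ℝ) (n : ℕ) : |max (min x n) (-(n:ℝ))| ≤ |x| := by
  have hn : (0:ℝ) ≤ n := Nat.cast_nonneg n
  rw [abs_le]
  constructor
  · rcases le_or_gt 0 x with hx | hx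
    · have : (0:ℝ) ≤ min x n := le_min hx hn
      have := le_max_left (min x ↑n) (-(n:ℝ))
      have habs : -|x| ≤ 0 := neg_nonpos.2 (abs_nonneg x)
      linarith
    · have h1 : -|x| = x := by rw [abs_of_neg hx]; ring
      rw [h1]
      have h2 : x ≤ min x n := le_min (le_refl x) (by linarith)
      exact h2.trans (le_max_left _ _)
  · refine max_le (le_trans (min_le_left _ _) (le_abs_self x)) ?_
    have habs : 0 ≤ |x| := abs_nonneg x
    linarith

end Approx

section Approx2

variable {Ω : Type*} [MeasurableSpace Ω] (μ ν : Measure Ω)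
  [IsProbabilityMeasure μ] [IsProbabilityMeasure ν]

lemma dvSeq_exp_int (n : ℕ) : Integrable (fun ω => Real.exp (dvSeq μ ν n ω)) ν := by
  refine ⟨(dvSeq_measurable μ ν n).exp.aestronglyMeasurable, ?_⟩
  refine HasFiniteIntegral.of_bounded (C := Real.exp n) (Eventually.of_forall fun ω => ?_)
  rw [Real.norm_eq_abs, abs_of_pos (Real.exp_pos _)]
  exact Real.exp_le_exp.2 (abs_le.1 (dvSeq_abs_le μ ν n ω)).2

lemma dvSeq_exp_integral_le (hac : μ ≪ ν) (n : ℕ) :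
    ∫ ω, Real.exp (dvSeq μ ν n ω) ∂ν ≤ 1 + Real.exp (-(n:ℝ)) := by
  have hfint : Integrable (fun ω => (μ.rnDeriv ν ω).toReal) ν :=
    Measure.integrable_toReal_rnDeriv
  have hmono : ∫ ω, Real.exp (dvSeq μ ν n ω) ∂ν
      ≤ ∫ ω, ((μ.rnDeriv ν ω).toReal + Real.exp (-(n:ℝ))) ∂ν := by
    refine integral_mono_ae (dvSeq_exp_int μ ν n) (hfint.add (integrable_const _)) ?_
    filter_upwards [Measure.rnDeriv_lt_top μ ν] with ω hlt
    unfold dvSeq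
    split_ifs with h
    · have : (0:ℝ) ≤ (μ.rnDeriv ν ω).toReal := ENNReal.toReal_nonneg
      linarith
    · have hfpos : 0 < (μ.rnDeriv ν ω).toReal := ENNReal.toReal_pos h hlt.ne
      have h1 : max (min (Real.log ((μ.rnDeriv ν ω).toReal)) n) (-(n:ℝ))
          ≤ max (Real.log ((μ.rnDeriv ν ω).toReal)) (-(n:ℝ)) :=
        max_le_max (min_le_left _ _) (le_refl _)
      calc Real.exp (max (min (Real.log ((μ.rnDeriv ν ω).toReal)) n) (-(n:ℝ)))
          ≤ Real.exp (max (Real.log ((μ.rnDeriv ν ω).toReal)) (-(n:ℝ))) :=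
            Real.exp_le_exp.2 h1
        _ = max (Real.exp (Real.log ((μ.rnDeriv ν ω).toReal))) (Real.exp (-(n:ℝ))) := by
            rcases max_cases (Real.log ((μ.rnDeriv ν ω).toReal)) (-(n:ℝ)) with ⟨he, hle⟩ | ⟨he, hle⟩
            · rw [he, max_eq_left (Real.exp_le_exp.2 hle)]
            · rw [he, max_eq_right (Real.exp_le_exp.2 hle.le)]
        _ = max ((μ.rnDeriv ν ω).toReal) (Real.exp (-(n:ℝ))) := by
            rw [Real.exp_log hfpos]
        _ ≤ (μ.rnDeriv ν ω).toReal + Real.exp (-(n:ℝ)) :=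
            max_le (le_add_of_nonneg_right (Real.exp_pos _).le) (le_add_of_nonneg_left ENNReal.toReal_nonneg)
  calc ∫ ω, Real.exp (dvSeq μ ν n ω) ∂ν
      ≤ ∫ ω, ((μ.rnDeriv ν ω).toReal + Real.exp (-(n:ℝ))) ∂ν := hmono
    _ = 1 + Real.exp (-(n:ℝ)) := by
        rw [integral_add hfint (integrable_const _), Measure.integral_toReal_rnDeriv hac,
          integral_const]
        simp

lemma dvSeq_exp_integral_pos (n : ℕ) :
    0 < ∫ ω, Real.exp (dvSeq μ ν n ω) ∂ν := by
  have hle : Real.exp (-(n:ℝ)) ≤ ∫ ω, Real.exp (dvSeq μ ν n ω) ∂ν := by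
    calc Real.exp (-(n:ℝ)) = ∫ _, Real.exp (-(n:ℝ)) ∂ν := by simp
      _ ≤ _ := by
        refine integral_mono (integrable_const _) (dvSeq_exp_int μ ν n) fun ω => ?_
        exact Real.exp_le_exp.2 (abs_le.1 (dvSeq_abs_le μ ν n ω)).1
  linarith [Real.exp_pos (-(n:ℝ))]

lemma dvSeq_tendsto_integral (hac : μ ≪ ν)
    (hint : Integrable (fun ω => Real.log ((μ.rnDeriv ν ω).toReal)) μ) :
    Tendsto (fun n => ∫ ω, dvSeq μ ν n ω ∂μ) atTop
      (nhds (∫ ω, Real.log ((μ.rnDeriv ν ω).toReal) ∂μ)) := by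
  refine tendsto_integral_of_dominated_convergence
    (fun ω => |Real.log ((μ.rnDeriv ν ω).toReal)|)
    (fun n => (dvSeq_measurable μ ν n).aestronglyMeasurable) hint.abs ?_ ?_
  · intro n
    filter_upwards [Measure.rnDeriv_pos hac] with ω hpos
    rw [Real.norm_eq_abs]
    unfold dvSeq
    rw [if_neg hpos.ne']
    exact clamp_abs_le _ n
  · filter_upwards [Measure.rnDeriv_pos hac] with ω hpos
    set x := Real.log ((μ.rnDeriv ν ω).toReal) with hx
    refine Tendsto.congr' ?_ (tendsto_const_nhds (x := x))
    rw [EventuallyEq, eventually_atTop]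
    refine ⟨⌈|x|⌉₊, fun n hn => ?_⟩
    have hxn : |x| ≤ (n:ℝ) := (Nat.le_ceil _).trans (Nat.cast_le.2 hn)
    unfold dvSeq
    rw [if_neg hpos.ne', ← hx]
    rw [min_eq_left ((le_abs_self x).trans hxn),
      max_eq_left (by linarith [neg_le_abs x, (abs_le.1 hxn)] : -(n:ℝ) ≤ x)]

lemma dvSeq_log_tendsto :
    Tendsto (fun n : ℕ => Real.log (1 + Real.exp (-(n:ℝ)))) atTop (nhds 0) := by
  have h1 : Tendsto (fun n : ℕ => Real.exp (-(n:ℝ))) atTop (nhds 0) := by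
    apply Real.tendsto_exp_atBot.comp
    exact tendsto_neg_atBot_iff.2 tendsto_natCast_atTop_atTop
  have h2 : Tendsto (fun n : ℕ => 1 + Real.exp (-(n:ℝ))) atTop (nhds 1) := by
    have := tendsto_const_nhds (x := (1:ℝ)) (f := atTop (α := ℕ)) |>.add h1
    simpa using this
  have h3 := (Real.continuousAt_log one_ne_zero).tendsto.comp h2
  simpa [Function.comp_def] using h3

end Approx2

theorem donsker_varadhan {Ω : Type*} [MeasurableSpace Ω] (μ ν : Measure Ω)
    [IsProbabilityMeasure μ] [IsProbabilityMeasure ν] (hac : μ ≪ ν)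
    (hint : Integrable (fun ω => Real.log ((μ.rnDeriv ν ω).toReal)) μ) :
    ∫ ω, Real.log ((μ.rnDeriv ν ω).toReal) ∂μ
      = ⨆ g : {g : Ω → ℝ // Measurable g ∧ ∃ M, ∀ ω, |g ω| ≤ M},
          (∫ ω, g.1 ω ∂μ - Real.log (∫ ω, Real.exp (g.1 ω) ∂ν)) := by
  set KL := ∫ ω, Real.log ((μ.rnDeriv ν ω).toReal) ∂μ with hKL
  set S := {g : Ω → ℝ // Measurable g ∧ ∃ M, ∀ ω, |g ω| ≤ M} with hS
  set val : S → ℝ := fun g => ∫ ω, g.1 ω ∂μ - Real.log (∫ ω, Real.exp (g.1 ω) ∂ν)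
    with hval
  have hub : ∀ s : S, val s ≤ KL := by
    rintro ⟨g, hg, M, hM⟩
    exact dv_gibbs μ ν hac hint g hg M hM
  have hne : Nonempty S := ⟨⟨fun _ => 0, measurable_const, 0, fun ω => by simp⟩⟩
  have hbdd : BddAbove (Set.range val) := by
    refine ⟨KL, ?_⟩
    rintro x ⟨s, rfl⟩
    exact hub s
  refine le_antisymm ?_ (ciSup_le hub)
  -- lower bound via the sequence dvSeq
  have hseq : ∀ n : ℕ, ∫ ω, dvSeq μ ν n ω ∂μ - Real.log (1 + Real.exp (-(n:ℝ)))
      ≤ ⨆ s : S, val s := by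
    intro n
    set s : S := ⟨dvSeq μ ν n, dvSeq_measurable μ ν n, n, dvSeq_abs_le μ ν n⟩ with hs
    have h1 : Real.log (∫ ω, Real.exp (dvSeq μ ν n ω) ∂ν)
        ≤ Real.log (1 + Real.exp (-(n:ℝ))) :=
      Real.log_le_log (dvSeq_exp_integral_pos μ ν n) (dvSeq_exp_integral_le μ ν hac n)
    have h2 : ∫ ω, dvSeq μ ν n ω ∂μ - Real.log (1 + Real.exp (-(n:ℝ))) ≤ val s := by
      rw [hval]
      simp only [hs]
      linarith
    exact h2.trans (le_ciSup hbdd s)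
  have htend : Tendsto (fun n : ℕ => ∫ ω, dvSeq μ ν n ω ∂μ
      - Real.log (1 + Real.exp (-(n:ℝ)))) atTop (nhds KL) := by
    have := (dvSeq_tendsto_integral μ ν hac hint).sub dvSeq_log_tendsto
    simpa using this
  exact le_of_tendsto htend (Eventually.of_forall hseq)
end

section
/- Variational principle for entropy: for a nonnegative integrable random variable Y on a probability space, Ent(Y) = sup { E[YZ] : Z measurable with E[exp Z] ≤ 1 }. -/
set_option linter.unnecessarySimpa false
open MeasureTheory ENNReal Filter

lemma young_ineq (a z : ℝ) (ha : 0 ≤ a) :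
    a * z ≤ a * Real.log a - a + Real.exp z := by
  rcases ha.eq_or_lt with h | h
  · simp [← h]; positivity
  · have ht := Real.add_one_le_exp (z - Real.log a)
    have h2 : a * (z - Real.log a + 1) ≤ a * Real.exp (z - Real.log a) :=
      mul_le_mul_of_nonneg_left ht ha
    rw [Real.exp_sub, Real.exp_log h] at h2
    have : a * (Real.exp z / a) = Real.exp z := by field_simp
    nlinarith [h2]

lemma young_ineq2 (y z m : ℝ) (hy : 0 ≤ y) (hm : 0 < m) :
    y * z ≤ y * Real.log y - Real.log m * y - y + m * Real.exp z := by
  rcases hy.eq_or_lt with h0 | h0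
  · simp [← h0]; positivity
  · have h := young_ineq (y / m) z (by positivity)
    rw [Real.log_div (ne_of_gt h0) (ne_of_gt hm)] at h
    have h2 := mul_le_mul_of_nonneg_left h hm.le
    calc y * z = m * (y / m * z) := by field_simp
      _ ≤ m * (y / m * (Real.log y - Real.log m) - y / m + Real.exp z) := h2
      _ = y * Real.log y - Real.log m * y - y + m * Real.exp z := by field_simp

lemma logbound (y ε : ℝ) (hy : 0 ≤ y) (hε : 0 < ε) (hε1 : ε ≤ 1) :
    |y * Real.log (y + ε)| ≤ |y * Real.log y| + y * Real.log 2 := by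
  rcases hy.eq_or_lt with h | h
  · simp [← h]
  · have hup : Real.log (y + ε) ≤ Real.log 2 + max (Real.log y) 0 := by
      rcases le_total y 1 with h1 | h1
      · calc Real.log (y + ε) ≤ Real.log 2 := Real.log_le_log (by linarith) (by linarith)
          _ ≤ _ := by simp [le_max_right]
      · calc Real.log (y + ε) ≤ Real.log (2 * y) :=
            Real.log_le_log (by linarith) (by linarith)
          _ = Real.log 2 + Real.log y := Real.log_mul (by norm_num) (by linarith)
          _ ≤ _ := by simp [le_max_left]
    have hlow : Real.log y ≤ Real.log (y + ε) := Real.log_le_log h (by linarith)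
    rw [abs_le]
    constructor
    · have : y * Real.log y ≤ y * Real.log (y + ε) := mul_le_mul_of_nonneg_left hlow hy
      have h3 : -(|y * Real.log y|) ≤ y * Real.log y := neg_abs_le _
      nlinarith [Real.log_pos (by norm_num : (1:ℝ) < 2), h.le]
    · have h4 : y * Real.log (y + ε) ≤ y * (Real.log 2 + max (Real.log y) 0) :=
        mul_le_mul_of_nonneg_left hup hy
      have h5 : y * max (Real.log y) 0 ≤ |y * Real.log y| := by
        rcases le_total (Real.log y) 0 with h6 | h6
        · rw [max_eq_right h6, mul_zero]; positivity
        · rw [max_eq_left h6]; exact le_abs_self _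
      nlinarith

theorem entropy_variational {Ω : Type*} [MeasurableSpace Ω] (μ : Measure Ω)
    [IsProbabilityMeasure μ] (Y : Ω → ℝ) (hY : Measurable Y) (hY0 : 0 ≤ Y)
    (hYint : Integrable Y μ)
    (hYlog : Integrable (fun ω => Y ω * Real.log (Y ω)) μ) :
    ∫ ω, Y ω * Real.log (Y ω) ∂μ - (∫ ω, Y ω ∂μ) * Real.log (∫ ω, Y ω ∂μ)
      = ⨆ Z : {Z : Ω → ℝ // Measurable Z ∧ Integrable (fun ω => Real.exp (Z ω)) μ ∧
            (∫ ω, Real.exp (Z ω) ∂μ) ≤ 1 ∧ Integrable (fun ω => Y ω * Z ω) μ},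
          ∫ ω, Y ω * Z.1 ω ∂μ := by
  set T := {Z : Ω → ℝ // Measurable Z ∧ Integrable (fun ω => Real.exp (Z ω)) μ ∧
      (∫ ω, Real.exp (Z ω) ∂μ) ≤ 1 ∧ Integrable (fun ω => Y ω * Z ω) μ} with hT
  have hTne : Nonempty T := by
    refine ⟨⟨fun _ => 0, measurable_const, ?_, ?_, ?_⟩⟩
    · simpa [Real.exp_zero] using (integrable_const (1:ℝ) : Integrable (fun _ : Ω => (1:ℝ)) μ)
    · simp
    · simpa using (integrable_const (0:ℝ) : Integrable (fun _ : Ω => (0:ℝ)) μ)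
  set m := ∫ ω, Y ω ∂μ with hmdef
  have hm0 : 0 ≤ m := integral_nonneg hY0
  rcases hm0.eq_or_lt with hm | hm
  · -- degenerate case: Y = 0 a.e.
    have hae : Y =ᵐ[μ] 0 := by
      rw [← integral_eq_zero_iff_of_nonneg hY0 hYint]; exact hm.symm
    have h1 : ∫ ω, Y ω * Real.log (Y ω) ∂μ = 0 := by
      apply integral_eq_zero_of_ae
      filter_upwards [hae] with ω h; simp [h]
    have h2 : ∀ Z : T, ∫ ω, Y ω * Z.1 ω ∂μ = 0 := by
      intro Z
      apply integral_eq_zero_of_ae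
      filter_upwards [hae] with ω h; simp [h]
    rw [h1, ← hm]
    simp only [h2]
    rw [ciSup_const]
    simp
  · -- main case: m > 0
    -- Upper bound
    have hupper : ∀ Z : T, ∫ ω, Y ω * Z.1 ω ∂μ
        ≤ ∫ ω, Y ω * Real.log (Y ω) ∂μ - m * Real.log m := by
      rintro ⟨Z, hZm, hZexp, hZ1, hZY⟩
      have hi1 : Integrable (fun ω => Real.log m * Y ω) μ := hYint.const_mul _
      have hi2 : Integrable (fun ω => Y ω * Real.log (Y ω) - Real.log m * Y ω) μ :=
        hYlog.sub hi1
      have hi3 : Integrable (fun ω => Y ω * Real.log (Y ω) - Real.log m * Y ω - Y ω) μ :=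
        hi2.sub hYint
      have hi4 : Integrable (fun ω => m * Real.exp (Z ω)) μ := hZexp.const_mul m
      have hRHSint : Integrable (fun ω => Y ω * Real.log (Y ω) - Real.log m * Y ω - Y ω
          + m * Real.exp (Z ω)) μ := hi3.add hi4
      have hle := integral_mono hZY hRHSint
        (fun ω => young_ineq2 (Y ω) (Z ω) m (hY0 ω) hm)
      rw [integral_add hi3 hi4, integral_sub hi2 hYint,
        integral_sub hYlog hi1, integral_const_mul, integral_const_mul] at hle
      have hmul : m * ∫ ω, Real.exp (Z ω) ∂μ ≤ m * 1 :=
        mul_le_mul_of_nonneg_left hZ1 hm.le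
      simp only [← hmdef] at hle
      nlinarith [hle, hmul]
    -- Lower bound via approximating sequence
    set c : ℕ → ℝ := fun n => 1 / (n + 1) with hcdef
    have hc0 : ∀ n, 0 < c n := fun n => by positivity
    have hc1 : ∀ n, c n ≤ 1 := fun n => by
      rw [hcdef, div_le_one (by positivity)]; linarith [Nat.cast_nonneg (α := ℝ) n]
    have hcm : ∀ n, 0 < m + c n := fun n => by have := hc0 n; linarith
    have hYc : ∀ n ω, 0 < Y ω + c n := fun n ω => add_pos_of_nonneg_of_pos (hY0 ω) (hc0 n)
    have hexp_eq : ∀ n, (fun ω => Real.exp (Real.log (Y ω + c n) - Real.log (m + c n)))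
        = fun ω => (Y ω + c n) / (m + c n) := by
      intro n; funext ω
      rw [Real.exp_sub, Real.exp_log (hYc n ω), Real.exp_log (hcm n)]
    have hintc : ∀ n, Integrable (fun ω => Y ω + c n) μ :=
      fun n => hYint.add (integrable_const _)
    have hmeas : ∀ n, Measurable (fun ω => Real.log (Y ω + c n) - Real.log (m + c n)) :=
      fun n => ((hY.add_const _).log).sub_const _
    have hexpint : ∀ n, Integrable
        (fun ω => Real.exp (Real.log (Y ω + c n) - Real.log (m + c n))) μ := by
      intro n; rw [hexp_eq n]; exact (hintc n).div_const _
    have hexp1 : ∀ n, ∫ ω, Real.exp (Real.log (Y ω + c n) - Real.log (m + c n)) ∂μ ≤ 1 := by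
      intro n
      rw [hexp_eq n]
      rw [integral_div, integral_add hYint (integrable_const _), integral_const]
      simp only [probReal_univ, smul_eq_mul, one_mul, ← hmdef]
      rw [div_self (ne_of_gt (hcm n))]
    have hYlogc : ∀ n, Integrable (fun ω => Y ω * Real.log (Y ω + c n)) μ := by
      intro n
      refine Integrable.mono' (hYlog.abs.add (hYint.mul_const (Real.log 2)))
        ((hY.mul ((hY.add_const _).log)).aestronglyMeasurable) ?_
      exact Eventually.of_forall fun ω => by
        rw [Real.norm_eq_abs]; exact logbound (Y ω) (c n) (hY0 ω) (hc0 n) (hc1 n)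
    have hZnrw : ∀ n, (fun ω => Y ω * (Real.log (Y ω + c n) - Real.log (m + c n)))
        = fun ω => Y ω * Real.log (Y ω + c n) - Real.log (m + c n) * Y ω := by
      intro n; funext ω; ring
    have hYZint : ∀ n, Integrable
        (fun ω => Y ω * (Real.log (Y ω + c n) - Real.log (m + c n))) μ := by
      intro n; rw [hZnrw n]; exact (hYlogc n).sub (hYint.const_mul _)
    set Tn : ℕ → T := fun n => ⟨fun ω => Real.log (Y ω + c n) - Real.log (m + c n),
      hmeas n, hexpint n, hexp1 n, hYZint n⟩ with hTndef
    have hval : ∀ n, ∫ ω, Y ω * (Tn n).1 ω ∂μ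
        = (∫ ω, Y ω * Real.log (Y ω + c n) ∂μ) - Real.log (m + c n) * m := by
      intro n
      show ∫ ω, Y ω * (Real.log (Y ω + c n) - Real.log (m + c n)) ∂μ = _
      rw [hZnrw n, integral_sub (hYlogc n) (hYint.const_mul _), integral_const_mul, ← hmdef]
    have hc_tendsto : Tendsto c atTop (nhds 0) := tendsto_one_div_add_atTop_nhds_zero_nat
    have hA : Tendsto (fun n => ∫ ω, Y ω * Real.log (Y ω + c n) ∂μ) atTop
        (nhds (∫ ω, Y ω * Real.log (Y ω) ∂μ)) := by
      refine tendsto_integral_of_dominated_convergence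
        (fun ω => |Y ω * Real.log (Y ω)| + Y ω * Real.log 2)
        (fun n => (hY.mul ((hY.add_const _).log)).aestronglyMeasurable)
        (hYlog.abs.add (hYint.mul_const (Real.log 2)))
        (fun n => Eventually.of_forall fun ω => by
          rw [Real.norm_eq_abs]; exact logbound (Y ω) (c n) (hY0 ω) (hc0 n) (hc1 n))
        (Eventually.of_forall fun ω => ?_)
      rcases (hY0 ω).eq_or_lt with h0 | h0
      · have h0' : Y ω = 0 := ((hY0 ω).eq_or_lt.resolve_right (fun h => (h.ne' (by exact h0.symm ▸ rfl)).elim)).symm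
        simp only [h0', zero_mul]
        exact tendsto_const_nhds
      · have h1 : Tendsto (fun n => Y ω + c n) atTop (nhds (Y ω)) := by
          simpa using tendsto_const_nhds.add hc_tendsto
        exact tendsto_const_nhds.mul
          (((Real.continuousAt_log (ne_of_gt h0)).tendsto).comp h1)
    have hB : Tendsto (fun n => Real.log (m + c n) * m) atTop (nhds (Real.log m * m)) := by
      have h1 : Tendsto (fun n => m + c n) atTop (nhds m) := by
        simpa using tendsto_const_nhds.add hc_tendsto
      exact (((Real.continuousAt_log (ne_of_gt hm)).tendsto).comp h1).mul_const m
    have htend : Tendsto (fun n => ∫ ω, Y ω * (Tn n).1 ω ∂μ) atTop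
        (nhds (∫ ω, Y ω * Real.log (Y ω) ∂μ - m * Real.log m)) := by
      simp only [hval]
      have := hA.sub hB
      simpa [mul_comm] using this
    have hbdd : BddAbove (Set.range fun Z : T => ∫ ω, Y ω * Z.1 ω ∂μ) :=
      ⟨∫ ω, Y ω * Real.log (Y ω) ∂μ - m * Real.log m, by
        rintro x ⟨Z, rfl⟩; exact hupper Z⟩
    refine le_antisymm ?_ (ciSup_le hupper)
    exact le_of_tendsto htend (Eventually.of_forall fun n => le_ciSup hbdd (Tn n))
end

section
/- Lower bound showing exponential dependence is necessary: let μ = ½δ_{-R} + ½δ_R on ℝ and t > 0 with t ≤ R². Then the Poincaré constant of μ * γ_{0,t} (with respect to the standard gradient) satisfies C_P(μ * γ_{0,t}) ≥ (R²/4)·exp(R²/(8t)). -/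
open MeasureTheory ENNReal ProbabilityTheory

noncomputable def var {Y : Type*} [MeasurableSpace Y] (ρ : Measure Y) (f : Y → ℝ) : ℝ :=
  ∫ y, f y ^ 2 ∂ρ - (∫ y, f y ∂ρ) ^ 2

noncomputable def convR (μ ν : Measure ℝ) : Measure ℝ :=
  (μ.prod ν).map fun p => p.1 + p.2

section Aux

open Set

open scoped NNReal Real

/-- The witness function: clamp of `2x/R` to `[-1,1]`. -/
noncomputable def wit (R x : ℝ) : ℝ := max (-1) (min 1 (2 * x / R))

lemma wit_cont (R : ℝ) : Continuous (wit R) := by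
  unfold wit; fun_prop

lemma wit_abs_le_one (R x : ℝ) : |wit R x| ≤ 1 := by
  rw [abs_le]; unfold wit
  constructor
  · exact le_max_left _ _
  · exact max_le (by norm_num) (min_le_left _ _)

lemma wit_lip {R : ℝ} (hR : 0 < R) : LipschitzWith (2/R).toNNReal (wit R) := by
  apply LipschitzWith.of_dist_le_mul
  intro x y
  rw [Real.dist_eq, Real.dist_eq]
  have h1 : |wit R x - wit R y| ≤ |min 1 (2 * x / R) - min 1 (2 * y / R)| := by
    unfold wit
    have := abs_max_sub_max_le_abs (min 1 (2 * x / R)) (min 1 (2 * y / R)) (-1)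
    simpa [max_comm] using this
  have h2 : |min 1 (2 * x / R) - min 1 (2 * y / R)| ≤ |2 * x / R - 2 * y / R| := by
    have := abs_min_sub_min_le_max (1:ℝ) (2 * x / R) 1 (2 * y / R)
    simpa using this
  have h3 : |2 * x / R - 2 * y / R| = (2/R) * |x - y| := by
    rw [← abs_of_pos (show (0:ℝ) < 2/R by positivity), ← abs_mul]
    ring_nf
  calc |wit R x - wit R y| ≤ |2 * x / R - 2 * y / R| := h1.trans h2
    _ = (2/R) * |x - y| := h3
    _ = ((2/R).toNNReal : ℝ) * |x - y| := by
        rw [Real.coe_toNNReal _ (by positivity)]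

lemma wit_odd (R x : ℝ) : wit R (-x) = - wit R x := by
  unfold wit
  have e : 2 * (-x) / R = -(2 * x / R) := by ring
  rw [e]
  set y := 2 * x / R
  simp only [max_def, min_def]
  split_ifs <;> linarith

lemma wit_eq_one {R x : ℝ} (hR : 0 < R) (hx : R/2 < x) : wit R x = 1 := by
  unfold wit
  have : (1:ℝ) ≤ 2 * x / R := by rw [le_div_iff₀ hR]; linarith
  rw [min_eq_left this, max_eq_right (by norm_num)]

lemma wit_eq_negone {R x : ℝ} (hR : 0 < R) (hx : x < -(R/2)) : wit R x = -1 := by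
  unfold wit
  have : 2 * x / R ≤ -1 := by rw [div_le_iff₀ hR]; linarith
  exact max_eq_left (le_trans (min_le_right _ _) this)

lemma wit_sq_eq_one {R x : ℝ} (hR : 0 < R) (hx : x ∉ Icc (-(R/2)) (R/2)) :
    wit R x ^ 2 = 1 := by
  rw [mem_Icc, not_and_or] at hx
  push_neg at hx
  rcases hx with hx | hx
  · rw [wit_eq_negone hR hx]; norm_num
  · rw [wit_eq_one hR hx]; norm_num

lemma deriv_wit_sq_le {R : ℝ} (hR : 0 < R) (x : ℝ) :
    deriv (wit R) x ^ 2 ≤ (2/R)^2 * (Icc (-(R/2)) (R/2)).indicator 1 x := by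
  by_cases hx : x ∈ Icc (-(R/2)) (R/2)
  · rw [indicator_of_mem hx]
    have hd : |deriv (wit R) x| ≤ 2/R := by
      have := norm_deriv_le_of_lipschitz (𝕜 := ℝ) (x₀ := x) (wit_lip hR)
      rwa [Real.norm_eq_abs, Real.coe_toNNReal _ (by positivity)] at this
    simp only [Pi.one_apply, mul_one]
    calc deriv (wit R) x ^ 2 = |deriv (wit R) x| ^ 2 := (sq_abs _).symm
      _ ≤ (2/R)^2 := by gcongr
  · rw [indicator_of_notMem hx, mul_zero]
    have hd : deriv (wit R) x = 0 := by
      rw [mem_Icc, not_and_or] at hx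
      push_neg at hx
      rcases hx with hx | hx
      · have hev : wit R =ᶠ[nhds x] (fun _ => -1) := by
          filter_upwards [eventually_lt_nhds hx] with y hy
          exact wit_eq_negone hR hy
        rw [hev.deriv_eq, deriv_const]
      · have hev : wit R =ᶠ[nhds x] (fun _ => 1) := by
          filter_upwards [eventually_gt_nhds hx] with y hy
          exact wit_eq_one hR hy
        rw [hev.deriv_eq, deriv_const]
    simp [hd]

lemma gauss_map_neg (m : ℝ) (v : ℝ≥0) :
    (gaussianReal m v).map (fun x => -x) = gaussianReal (-m) v := by
  have h := gaussianReal_map_const_mul (μ := m) (v := v) (-1)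
  simp only [neg_one_mul] at h
  rw [h]
  congr 1
  ext
  norm_num

lemma gauss_Iic_self {v : ℝ≥0} (hv : v ≠ 0) (m : ℝ) :
    gaussianReal m v (Set.Iic m) = 1/2 := by
  have hmap : (gaussianReal 0 v).map (m + ·) = gaussianReal m v := by
    rw [gaussianReal_map_const_add, zero_add]
  have h0 : gaussianReal m v (Set.Iic m) = gaussianReal 0 v (Set.Iic 0) := by
    rw [← hmap, Measure.map_apply (measurable_const_add m) measurableSet_Iic]
    congr 1
    ext y
    simp only [mem_preimage, mem_Iic]
    constructor <;> intro h <;> linarith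
  have hsing : gaussianReal 0 v ({0} : Set ℝ) = 0 :=
    gaussianReal_absolutelyContinuous 0 hv Real.volume_singleton
  have hsym : gaussianReal 0 v (Set.Iic 0) = gaussianReal 0 v (Set.Ici 0) := by
    have hm : (gaussianReal 0 v).map (fun x => -x) = gaussianReal 0 v := by
      rw [gauss_map_neg, neg_zero]
    conv_lhs => rw [← hm]
    rw [Measure.map_apply measurable_neg measurableSet_Iic]
    congr 1
    ext y
    simp
  have hIci : gaussianReal 0 v (Set.Ici 0) = gaussianReal 0 v (Set.Ioi 0) := by
    rw [← Set.Ioi_union_left,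
      measure_union (by simp) (measurableSet_singleton 0), hsing, add_zero]
  have htot : gaussianReal 0 v (Set.Iic 0) + gaussianReal 0 v (Set.Ioi 0) = 1 := by
    rw [← measure_union (by simp [Set.disjoint_left]) measurableSet_Ioi]
    simp [Set.Iic_union_Ioi]
  have hkey : gaussianReal 0 v (Set.Iic 0) + gaussianReal 0 v (Set.Iic 0) = 1 := by
    nth_rewrite 2 [hsym]
    rw [hIci]; exact htot
  rw [h0]
  have hne : gaussianReal 0 v (Set.Iic 0) ≠ ⊤ := measure_ne_top _ _
  have h2 := congrArg ENNReal.toReal hkey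
  rw [ENNReal.toReal_add hne hne, ENNReal.toReal_one] at h2
  refine (ENNReal.toReal_eq_toReal_iff' hne (by norm_num)).1 ?_
  rw [show ((1:ℝ≥0∞)/2).toReal = (1:ℝ)/2 by simp]
  linarith

lemma conv_eq (R : ℝ) (v : ℝ≥0) :
    convR ((1/2 : ℝ≥0∞) • Measure.dirac (-R) + (1/2 : ℝ≥0∞) • Measure.dirac R) (gaussianReal 0 v)
      = (1/2 : ℝ≥0∞) • gaussianReal (-R) v + (1/2 : ℝ≥0∞) • gaussianReal R v := by
  ext s hs
  have hadd : Measurable fun p : ℝ × ℝ => p.1 + p.2 := measurable_fst.add measurable_snd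
  rw [convR, Measure.map_apply hadd hs, Measure.prod_apply (hadd hs)]
  have hmeas : Measurable fun x =>
      (gaussianReal 0 v) (Prod.mk x ⁻¹' ((fun p : ℝ × ℝ => p.1 + p.2) ⁻¹' s)) :=
    measurable_measure_prodMk_left (hadd hs)
  rw [lintegral_add_measure, lintegral_smul_measure, lintegral_smul_measure,
    lintegral_dirac' _ hmeas, lintegral_dirac' _ hmeas]
  have key : ∀ c : ℝ,
      (gaussianReal 0 v) (Prod.mk c ⁻¹' ((fun p : ℝ × ℝ => p.1 + p.2) ⁻¹' s))
        = gaussianReal c v s := by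
    intro c
    have hpre : Prod.mk c ⁻¹' ((fun p : ℝ × ℝ => p.1 + p.2) ⁻¹' s) = (c + ·) ⁻¹' s := rfl
    rw [hpre, ← Measure.map_apply (measurable_const_add c) hs, gaussianReal_map_const_add,
      zero_add]
  rw [key, key]
  simp [Measure.add_apply]

lemma gauss_tail {v : ℝ≥0} (hv : v ≠ 0) {R : ℝ} (hR : 0 < R) :
    gaussianReal R v (Set.Iic (R/2))
      ≤ ENNReal.ofReal (Real.exp (-(R^2) / (8 * (v:ℝ)))) * (1/2) := by
  have hv' : (0:ℝ) < v := by
    have := pos_iff_ne_zero.mpr hv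
    exact_mod_cast this
  rw [gaussianReal_apply _ hv]
  have hptw : ∀ x ∈ Set.Iic (R/2),
      gaussianPDF R v x
        ≤ ENNReal.ofReal (Real.exp (-(R^2)/(8*(v:ℝ)))) * gaussianPDF (R/2) v x := by
    intro x hx
    simp only [mem_Iic] at hx
    rw [gaussianPDF, gaussianPDF, ← ENNReal.ofReal_mul (Real.exp_nonneg _)]
    apply ENNReal.ofReal_le_ofReal
    rw [gaussianPDFReal, gaussianPDFReal]
    rw [show Real.exp (-(R^2)/(8*(v:ℝ))) * ((√(2 * π * v))⁻¹ * rexp (- (x - R/2)^2 / (2 * v)))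
        = (√(2 * π * v))⁻¹ * (rexp (-(R^2)/(8*(v:ℝ))) * rexp (- (x - R/2)^2 / (2 * v))) by ring,
      ← Real.exp_add]
    apply mul_le_mul_of_nonneg_left _ (by positivity)
    apply Real.exp_le_exp.2
    rw [show -(R^2)/(8*(v:ℝ)) + - (x - R/2)^2 / (2 * (v:ℝ))
        = (-(R^2)/4 + - (x - R/2)^2) / (2 * (v:ℝ)) by ring,
      div_le_div_iff_of_pos_right (by positivity)]
    nlinarith
  calc ∫⁻ x in Set.Iic (R/2), gaussianPDF R v x
      ≤ ∫⁻ x in Set.Iic (R/2),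
          ENNReal.ofReal (Real.exp (-(R^2)/(8*(v:ℝ)))) * gaussianPDF (R/2) v x :=
        setLIntegral_mono ((measurable_gaussianPDF _ _).const_mul _) hptw
    _ = ENNReal.ofReal (Real.exp (-(R^2)/(8*(v:ℝ))))
          * ∫⁻ x in Set.Iic (R/2), gaussianPDF (R/2) v x :=
        lintegral_const_mul _ (measurable_gaussianPDF _ _)
    _ = ENNReal.ofReal (Real.exp (-(R^2)/(8*(v:ℝ)))) * (1/2) := by
        rw [← gaussianReal_apply _ hv, gauss_Iic_self hv]

end Aux

theorem poincare_lower_bound (R t : ℝ) (hR : 0 < R) (ht : 0 < t) (htR : t ≤ R ^ 2)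
    (C : ℝ)
    (hC : ∀ f : ℝ → ℝ, (∃ L : NNReal, LipschitzWith L f) →
      var (convR ((1/2 : ℝ≥0∞) • Measure.dirac (-R) + (1/2 : ℝ≥0∞) • Measure.dirac R)
            (gaussianReal 0 t.toNNReal)) f
        ≤ C * ∫ x, deriv f x ^ 2
            ∂(convR ((1/2 : ℝ≥0∞) • Measure.dirac (-R) + (1/2 : ℝ≥0∞) • Measure.dirac R)
              (gaussianReal 0 t.toNNReal))) :
    R ^ 2 / 4 * Real.exp (R ^ 2 / (8 * t)) ≤ C := by
  classical
  set v : NNReal := t.toNNReal with hvdef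
  have hv : v ≠ 0 := by
    simp [hvdef, Real.toNNReal_eq_zero, not_le, ht]
  have hvt : (v : ℝ) = t := Real.coe_toNNReal _ ht.le
  set Gm : Measure ℝ := gaussianReal (-R) v with hGm
  set Gp : Measure ℝ := gaussianReal R v with hGp
  set ρ : Measure ℝ := (1/2 : ℝ≥0∞) • Gm + (1/2 : ℝ≥0∞) • Gp with hρ
  have hconv : convR ((1/2 : ℝ≥0∞) • Measure.dirac (-R) + (1/2 : ℝ≥0∞) • Measure.dirac R)
      (gaussianReal 0 v) = ρ := conv_eq R v
  rw [hconv] at hC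
  set I : Set ℝ := Set.Icc (-(R/2)) (R/2) with hI
  have hImeas : MeasurableSet I := measurableSet_Icc
  -- ρ is a probability measure
  haveI hPm : IsProbabilityMeasure Gm := by rw [hGm]; infer_instance
  haveI hPp : IsProbabilityMeasure Gp := by rw [hGp]; infer_instance
  haveI hPρ : IsProbabilityMeasure ρ := by
    constructor
    rw [hρ]
    simp only [Measure.add_apply, Measure.smul_apply, smul_eq_mul, measure_univ, mul_one]
    exact ENNReal.add_halves 1
  -- Gm I = Gp I
  have hGmGp : Gm I = Gp I := by
    have hm : Gp.map (fun x => -x) = Gm := by rw [hGp, hGm, gauss_map_neg]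
    rw [← hm, Measure.map_apply measurable_neg hImeas]
    congr 1
    ext y
    simp only [Set.mem_preimage, hI, Set.mem_Icc]
    constructor <;> intro h <;> constructor <;> linarith [h.1, h.2]
  have hρI : ρ I = Gp I := by
    rw [hρ]
    simp only [Measure.add_apply, Measure.smul_apply, smul_eq_mul, hGmGp]
    rw [← add_mul]
    rw [show (1:ℝ≥0∞)/2 + 1/2 = 1 from ENNReal.add_halves 1, one_mul]
  -- the tail bound
  set p : ℝ := (Gp I).toReal with hpdef
  have hGpI_ne_top : Gp I ≠ ⊤ := measure_ne_top _ _
  have hp_pos : 0 < p := by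
    apply ENNReal.toReal_pos _ hGpI_ne_top
    intro h0
    have hvol : volume I = 0 := gaussianReal_absolutelyContinuous' R hv h0
    rw [hI, Real.volume_Icc, ENNReal.ofReal_eq_zero] at hvol
    linarith
  have hp_le : p ≤ Real.exp (-(R^2/(8*t))) * (1/2) := by
    have h1 : Gp I ≤ ENNReal.ofReal (Real.exp (-(R^2) / (8 * t))) * (1/2) := by
      have h0 : Gp I ≤ Gp (Set.Iic (R/2)) := by
        apply measure_mono
        rw [hI]
        exact Set.Icc_subset_Iic_self
      refine h0.trans ?_
      have := gauss_tail hv hR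
      rwa [hvt] at this
    have h2 := ENNReal.toReal_mono (by simp [ENNReal.mul_ne_top, ENNReal.ofReal_ne_top]) h1
    rwa [ENNReal.toReal_mul, ENNReal.toReal_ofReal (Real.exp_nonneg _),
      show ((1:ℝ≥0∞)/2).toReal = (1:ℝ)/2 by simp, neg_div] at h2
  -- the witness function
  set f : ℝ → ℝ := wit R with hf
  have hfc : Continuous f := wit_cont R
  have hfm : AEStronglyMeasurable f ρ := hfc.aestronglyMeasurable
  have hfb : ∀ x, |f x| ≤ 1 := wit_abs_le_one R
  have hint : ∀ (ν : Measure ℝ) [IsFiniteMeasure ν], Integrable f ν := by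
    intro ν _
    exact (integrable_const (1:ℝ)).mono' hfc.aestronglyMeasurable (ae_of_all _ hfb)
  have hint2 : Integrable (fun x => f x ^ 2) ρ := by
    refine (integrable_const (1:ℝ)).mono' (hfc.pow 2).aestronglyMeasurable (ae_of_all _ ?_)
    intro x
    rw [Real.norm_eq_abs, abs_pow]
    nlinarith [hfb x, abs_nonneg (f x)]
  -- mean zero
  have hmean : ∫ x, f x ∂ρ = 0 := by
    have hsplit : ∫ x, f x ∂ρ = (1/2) * ∫ x, f x ∂Gm + (1/2) * ∫ x, f x ∂Gp := by
      rw [hρ, integral_add_measure ((hint Gm).smul_measure (by norm_num))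
        ((hint Gp).smul_measure (by norm_num)),
        integral_smul_measure, integral_smul_measure]
      norm_num
    have hneg : ∫ x, f x ∂Gm = - ∫ x, f x ∂Gp := by
      have hm : Gp.map (fun x => -x) = Gm := by rw [hGp, hGm, gauss_map_neg]
      rw [← hm, integral_map measurable_neg.aemeasurable hfc.aestronglyMeasurable]
      rw [show (fun x => f (-x)) = (fun x => - f x) by ext x; exact wit_odd R x]
      exact integral_neg f
    rw [hsplit, hneg]; ring
  -- second moment lower bound
  have hsq : 1 - (ρ I).toReal ≤ ∫ x, f x ^ 2 ∂ρ := by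
    have hptw : ∀ x, (1:ℝ) - I.indicator 1 x ≤ f x ^ 2 := by
      intro x
      by_cases hx : x ∈ I
      · rw [Set.indicator_of_mem hx]
        simp only [Pi.one_apply]
        have := sq_nonneg (f x)
        linarith
      · rw [Set.indicator_of_notMem hx]
        rw [hf, wit_sq_eq_one hR hx]
        simp
    have hind1 : Integrable (I.indicator (1 : ℝ → ℝ)) ρ :=
      (integrable_const (1:ℝ)).indicator hImeas
    have hind : Integrable (fun x => (1:ℝ) - I.indicator 1 x) ρ := by
      exact (integrable_const (1:ℝ)).sub hind1
    have := integral_mono hind hint2 hptw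
    calc 1 - (ρ I).toReal = ∫ x, ((1:ℝ) - I.indicator 1 x) ∂ρ := by
          rw [integral_sub (integrable_const 1) hind1,
            integral_const, integral_indicator_one hImeas]
          simp
          rfl
      _ ≤ ∫ x, f x ^ 2 ∂ρ := this
  -- Dirichlet energy upper bound
  have hdir : ∫ x, deriv f x ^ 2 ∂ρ ≤ (2/R)^2 * (ρ I).toReal := by
    have hptw : ∀ x, deriv f x ^ 2 ≤ (2/R)^2 * I.indicator 1 x := deriv_wit_sq_le hR
    have hind1 : Integrable (I.indicator (1 : ℝ → ℝ)) ρ :=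
      (integrable_const (1:ℝ)).indicator hImeas
    have hind : Integrable (fun x => (2/R)^2 * I.indicator 1 x) ρ :=
      hind1.const_mul _
    have h := integral_mono_of_nonneg (ae_of_all _ (fun x => sq_nonneg (deriv f x))) hind
      (ae_of_all _ hptw)
    calc ∫ x, deriv f x ^ 2 ∂ρ ≤ ∫ x, (2/R)^2 * I.indicator 1 x ∂ρ := h
      _ = (2/R)^2 * (ρ I).toReal := by
          rw [integral_const_mul, integral_indicator_one hImeas, measureReal_def]
  -- apply the hypothesis
  have hvar := hC f ⟨(2/R).toNNReal, wit_lip hR⟩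
  rw [var] at hvar
  rw [hmean] at hvar
  simp only [ne_eq, OfNat.ofNat_ne_zero, not_false_eq_true, zero_pow, sub_zero] at hvar
  -- numeric conclusion
  set E : ℝ := Real.exp (R^2/(8*t)) with hE
  have hE1 : 1 ≤ E := by
    rw [hE, ← Real.exp_zero]
    apply Real.exp_le_exp.2
    positivity
  have hEp : E * p ≤ 1/2 := by
    have : Real.exp (-(R^2/(8*t))) = E⁻¹ := by rw [Real.exp_neg]
    rw [this] at hp_le
    calc E * p ≤ E * (E⁻¹ * (1/2)) := by
          apply mul_le_mul_of_nonneg_left hp_le (by positivity)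
      _ = 1/2 := by field_simp
  have hp_half : p ≤ 1/2 := by
    nlinarith
  have hkey : E * p ≤ 1 - p := by linarith
  set D : ℝ := ∫ x, deriv f x ^ 2 ∂ρ with hD
  have hD0 : 0 ≤ D := integral_nonneg (fun x => sq_nonneg _)
  have h1p : 1 - (ρ I).toReal ≤ C * D := le_trans hsq hvar
  have hρIp : (ρ I).toReal = p := by rw [hρI]
  rw [hρIp] at h1p hdir
  have hC0 : 0 < C := by nlinarith
  have hch : (R^2/4*E) * ((2/R)^2 * p) ≤ C * ((2/R)^2 * p) := by
    have e1 : (R^2/4*E) * ((2/R)^2 * p) = E * p := by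
      field_simp
      ring
    rw [e1]
    calc E * p ≤ 1 - p := hkey
      _ ≤ C * D := h1p
      _ ≤ C * ((2/R)^2 * p) := mul_le_mul_of_nonneg_left hdir hC0.le
  exact le_of_mul_le_mul_right hch (by positivity)
end
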